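/- Let α > 0, μ̃ > 0 and t > 0, and define ζ̂ : [0,t) → [0,∞) by ζ̂(r) = √( μ̃ / (α·(1 − e^{−2μ̃(t−r)})) ). Then ∫₀ᵗ ζ̂(r)·exp(−μ̃·r − α·∫₀ʳ ζ̂(v)² dv) dr = √(1 − e^{−2μ̃t})/(2√(α·μ̃)). -/

import Mathlib

open MeasureTheory

private lemma exp_neg_2mul (μ x : ℝ) :
    Real.exp (-2 * μ * x) = (Real.exp (2 * μ * x))⁻¹ := by
  rw [← Real.exp_neg]; congr 1; ring

private lemma denom_pos {μ x : ℝ} (hμ : 0 < μ) (hx : 0 < x) :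
    0 < 1 - Real.exp (-2 * μ * x) := by
  have : Real.exp (-2 * μ * x) < 1 := Real.exp_lt_one_iff.mpr (by nlinarith)
  linarith

private lemma E_pos {μ x : ℝ} (hμ : 0 < μ) (hx : 0 < x) :
    0 < Real.exp (2 * μ * x) - 1 := by
  have : 1 < Real.exp (2 * μ * x) := Real.one_lt_exp_iff.mpr (by nlinarith)
  linarith

/-- FTC evaluation of the inner integral. -/
private lemma inner_integral_eval (μ t : ℝ) (hμ : 0 < μ) {r : ℝ} (hr0 : 0 ≤ r) (hrt : r < t) :
    (∫ v in (0:ℝ)..r, μ / (1 - Real.exp (-2 * μ * (t - v))))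
      = (1/2) * Real.log (Real.exp (2 * μ * t) - 1)
        - (1/2) * Real.log (Real.exp (2 * μ * (t - r)) - 1) := by
  have key : ∀ v ∈ Set.uIcc (0:ℝ) r,
      HasDerivAt (fun w => -((1/2) * Real.log (Real.exp (2 * μ * (t - w)) - 1)))
        (μ / (1 - Real.exp (-2 * μ * (t - v)))) v := by
    intro v hv
    rw [Set.uIcc_of_le hr0] at hv
    have htv : 0 < t - v := by linarith [hv.2]
    have hE : 0 < Real.exp (2 * μ * (t - v)) - 1 := E_pos hμ htv
    have h1 : HasDerivAt (fun w : ℝ => t - w) (-1) v := (hasDerivAt_id v).const_sub t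
    have h2 : HasDerivAt (fun w : ℝ => 2 * μ * (t - w)) (2 * μ * (-1)) v := h1.const_mul (2*μ)
    have h3 : HasDerivAt (fun w : ℝ => Real.exp (2 * μ * (t - w)) - 1)
        (Real.exp (2 * μ * (t - v)) * (2 * μ * (-1))) v := (h2.exp).sub_const 1
    have h4 := (h3.log hE.ne').const_mul (1/2 : ℝ)
    have h5 := h4.neg
    convert h5 using 1
    · rfl
    · rfl
    · rfl
    have hEne : Real.exp (2 * μ * (t - v)) - 1 ≠ 0 := hE.ne'
    have hexpne : Real.exp (2 * μ * (t - v)) ≠ 0 := (Real.exp_pos _).ne'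
    rw [exp_neg_2mul]
    field_simp
  have hcont : IntervalIntegrable (fun v => μ / (1 - Real.exp (-2 * μ * (t - v))))
      volume 0 r := by
    apply ContinuousOn.intervalIntegrable
    apply ContinuousOn.div continuousOn_const
    · fun_prop
    · intro v hv
      rw [Set.uIcc_of_le hr0] at hv
      have htv : 0 < t - v := by linarith [hv.2]
      exact (denom_pos hμ htv).ne'
  have := intervalIntegral.integral_eq_sub_of_hasDerivAt key hcont
  rw [this]
  ring_nf

private lemma exp_line_integral (μ t : ℝ) (hμ : 0 < μ) :
    (∫ r in (0:ℝ)..t, Real.exp (-2 * μ * r)) = (1 - Real.exp (-2 * μ * t)) / (2 * μ) := by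
  have key : ∀ r ∈ Set.uIcc (0:ℝ) t,
      HasDerivAt (fun r => -(Real.exp (-2 * μ * r) / (2 * μ))) (Real.exp (-2 * μ * r)) r := by
    intro r _
    have h1 : HasDerivAt (fun x : ℝ => -2 * μ * x) (-2 * μ) r := by
      simpa using (hasDerivAt_id r).const_mul (-2 * μ)
    have h2 := ((h1.exp).div_const (2 * μ)).neg
    convert h2 using 1
    · rfl
    · rfl
    · rfl
    field_simp
  have hcont : IntervalIntegrable (fun r => Real.exp (-2 * μ * r)) volume 0 t := by
    apply ContinuousOn.intervalIntegrable; fun_prop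
  rw [intervalIntegral.integral_eq_sub_of_hasDerivAt key hcont]
  rw [show -2 * μ * 0 = 0 by ring, Real.exp_zero]
  field_simp
  ring

theorem logQuadratic_candidate_proceeds_case_i (α μ t : ℝ)
    (hα : 0 < α) (hμ : 0 < μ) (ht : 0 < t) :
    (∫ r in (0 : ℝ)..t,
        Real.sqrt (μ / (α * (1 - Real.exp (-2 * μ * (t - r))))) *
          Real.exp (-μ * r - α * ∫ v in (0 : ℝ)..r,
            Real.sqrt (μ / (α * (1 - Real.exp (-2 * μ * (t - v))))) ^ 2))
      = Real.sqrt (1 - Real.exp (-2 * μ * t)) / (2 * Real.sqrt (α * μ)) := by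
  have hαne : α ≠ 0 := hα.ne'
  have hE0pos : 0 < Real.exp (2 * μ * t) - 1 := E_pos hμ ht
  set E0 : ℝ := Real.exp (2 * μ * t) - 1 with hE0def
  set c : ℝ := Real.sqrt (μ / α) * Real.exp (μ * t) / Real.sqrt E0 with hcdef
  have step1 : (∫ r in (0 : ℝ)..t,
        Real.sqrt (μ / (α * (1 - Real.exp (-2 * μ * (t - r))))) *
          Real.exp (-μ * r - α * ∫ v in (0 : ℝ)..r,
            Real.sqrt (μ / (α * (1 - Real.exp (-2 * μ * (t - v))))) ^ 2))
      = ∫ r in (0:ℝ)..t, c * Real.exp (-2 * μ * r) := by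
    apply intervalIntegral.integral_congr_ae
    have hne : ∀ᵐ x : ℝ, x ∉ ({t} : Set ℝ) :=
      compl_mem_ae_iff.mpr (measure_singleton t)
    filter_upwards [hne] with r hrne hmem
    rw [Set.uIoc_of_le ht.le] at hmem
    have hr0 : 0 < r := hmem.1
    have hrt : r < t := lt_of_le_of_ne hmem.2 (by simpa using hrne)
    have htr : 0 < t - r := by linarith
    have hErpos : 0 < Real.exp (2 * μ * (t - r)) - 1 := E_pos hμ htr
    set Er : ℝ := Real.exp (2 * μ * (t - r)) - 1 with hErdef
    have hdr : 0 < 1 - Real.exp (-2 * μ * (t - r)) := denom_pos hμ htr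
    -- inner integral
    have hinner : (∫ v in (0:ℝ)..r,
          Real.sqrt (μ / (α * (1 - Real.exp (-2 * μ * (t - v))))) ^ 2)
        = (1/α) * ((1/2) * Real.log E0 - (1/2) * Real.log Er) := by
      rw [hE0def, hErdef, ← inner_integral_eval μ t hμ hr0.le hrt,
        ← intervalIntegral.integral_const_mul]
      apply intervalIntegral.integral_congr
      intro v hv
      dsimp only
      rw [Set.uIcc_of_le hr0.le] at hv
      have htv : 0 < t - v := by linarith [hv.2]
      have hd : 0 < 1 - Real.exp (-2 * μ * (t - v)) := denom_pos hμ htv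
      have hx : 0 ≤ μ / (α * (1 - Real.exp (-2 * μ * (t - v)))) := by positivity
      rw [Real.sq_sqrt hx]
      field_simp
    rw [hinner]
    have hcan : α * ((1/α) * ((1/2) * Real.log E0 - (1/2) * Real.log Er))
        = (1/2) * Real.log E0 - (1/2) * Real.log Er := by field_simp
    rw [hcan]
    -- split the exponential
    have hsqErpos : 0 < Real.sqrt Er := Real.sqrt_pos.mpr hErpos
    have hsqE0pos : 0 < Real.sqrt E0 := Real.sqrt_pos.mpr hE0pos
    have hlogEr : (1/2) * Real.log Er = Real.log (Real.sqrt Er) := by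
      rw [Real.log_sqrt hErpos.le]; ring
    have hlogE0 : (1/2) * Real.log E0 = Real.log (Real.sqrt E0) := by
      rw [Real.log_sqrt hE0pos.le]; ring
    have hsplit : Real.exp (-μ * r - ((1/2) * Real.log E0 - (1/2) * Real.log Er))
        = Real.exp (-μ * r) * Real.sqrt Er * (Real.sqrt E0)⁻¹ := by
      rw [show -μ * r - ((1/2) * Real.log E0 - (1/2) * Real.log Er)
          = (-μ * r + (1/2) * Real.log Er) + (-((1/2) * Real.log E0)) by ring,
        Real.exp_add, Real.exp_add, Real.exp_neg, hlogEr, hlogE0,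
        Real.exp_log hsqErpos, Real.exp_log hsqE0pos]
    rw [hsplit]
    -- combine the square roots
    have hx0 : 0 ≤ μ / (α * (1 - Real.exp (-2 * μ * (t - r)))) := by positivity
    have harg : μ / (α * (1 - Real.exp (-2 * μ * (t - r)))) * Er
        = (μ / α) * Real.exp (2 * μ * (t - r)) := by
      rw [hErdef, exp_neg_2mul]
      have hexpne : Real.exp (2 * μ * (t - r)) ≠ 0 := (Real.exp_pos _).ne'
      have hEne : Real.exp (2 * μ * (t - r)) - 1 ≠ 0 := hErpos.ne'
      generalize Real.exp (2 * μ * (t - r)) = X at hexpne hEne ⊢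
      field_simp
    have hprod : Real.sqrt (μ / (α * (1 - Real.exp (-2 * μ * (t - r))))) * Real.sqrt Er
        = Real.sqrt (μ / α) * Real.exp (μ * (t - r)) := by
      rw [← Real.sqrt_mul hx0, harg, Real.sqrt_mul (by positivity : (0:ℝ) ≤ μ / α),
        show Real.exp (2 * μ * (t - r)) = (Real.exp (μ * (t - r)))^2 by
          rw [sq, ← Real.exp_add]; congr 1; ring,
        Real.sqrt_sq (Real.exp_nonneg _)]
    have hee : Real.exp (μ * (t - r)) * Real.exp (-μ * r)
        = Real.exp (μ * t) * Real.exp (-2 * μ * r) := by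
      rw [← Real.exp_add, ← Real.exp_add]; congr 1; ring
    calc Real.sqrt (μ / (α * (1 - Real.exp (-2 * μ * (t - r)))))
          * (Real.exp (-μ * r) * Real.sqrt Er * (Real.sqrt E0)⁻¹)
        = (Real.sqrt (μ / (α * (1 - Real.exp (-2 * μ * (t - r))))) * Real.sqrt Er)
          * (Real.exp (-μ * r) * (Real.sqrt E0)⁻¹) := by ring
      _ = (Real.sqrt (μ / α) * Real.exp (μ * (t - r)))
          * (Real.exp (-μ * r) * (Real.sqrt E0)⁻¹) := by rw [hprod]
      _ = c * Real.exp (-2 * μ * r) := by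
          rw [hcdef,
            show Real.sqrt (μ / α) * Real.exp (μ * t) / Real.sqrt E0 * Real.exp (-2 * μ * r)
              = Real.sqrt (μ / α) * (Real.exp (μ * t) * Real.exp (-2 * μ * r))
                * (Real.sqrt E0)⁻¹ by ring, ← hee]
          ring
  rw [step1, intervalIntegral.integral_const_mul, exp_line_integral μ t hμ]
  -- final algebra
  have hspos : 0 < 1 - Real.exp (-2 * μ * t) := denom_pos hμ ht
  set s : ℝ := 1 - Real.exp (-2 * μ * t) with hsdef
  have hE0s : E0 = Real.exp (2 * μ * t) * s := by
    rw [hE0def, hsdef, mul_sub, mul_one, ← Real.exp_add]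
    norm_num
  have hsqE0 : Real.sqrt E0 = Real.exp (μ * t) * Real.sqrt s := by
    rw [hE0s, Real.sqrt_mul (Real.exp_nonneg _),
      show Real.exp (2 * μ * t) = (Real.exp (μ * t))^2 by
        rw [sq, ← Real.exp_add]; congr 1; ring,
      Real.sqrt_sq (Real.exp_nonneg _)]
  have hsqs : 0 < Real.sqrt s := Real.sqrt_pos.mpr hspos
  have he : Real.exp (μ * t) ≠ 0 := (Real.exp_pos _).ne'
  have hc : c = Real.sqrt (μ / α) / Real.sqrt s := by
    rw [hcdef, hsqE0]; field_simp
  rw [hc, Real.sqrt_div hμ.le, Real.sqrt_mul hα.le]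
  have hsqα : 0 < Real.sqrt α := Real.sqrt_pos.mpr hα
  have hsqμ : 0 < Real.sqrt μ := Real.sqrt_pos.mpr hμ
  have hμs : Real.sqrt μ * Real.sqrt μ = μ := Real.mul_self_sqrt hμ.le
  have hss : Real.sqrt s * Real.sqrt s = s := Real.mul_self_sqrt hspos.le
  field_simp
  linear_combination s * hμs - μ * hss
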